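/- arXiv:1605.02640 — 2 statements merged into one kernel-verified Lean document; each statement's English description precedes it below -/
import Mathlib

section
/- Let ρ be a density matrix on ℂᵈ, and let F_m be finitely many d×d matrices with Σ_m F_m†F_m = I. Let 𝒜 be a set of Hermitian matrices closed under unitary conjugation, C(ρ) = sup_{T∈𝒜} Tr(ρT), and ℰ = {m : F_m ρ F_m† ≠ 0}. Then C(ρ) ≤ max_{m∈ℰ} C(F_m ρ F_m† / Tr(F_m†F_m ρ)). -/
open ComplexOrder Matrix

lemma trace_normSq {d : ℕ} (B : Matrix (Fin d) (Fin d) ℂ) :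
    (Bᴴ * B).trace = ((∑ j, ∑ i, Complex.normSq (B i j) : ℝ) : ℂ) := by
  push_cast
  simp only [Matrix.trace, Matrix.mul_apply, Matrix.diag, Matrix.conjTranspose_apply]
  congr 1; ext j; congr 1; ext i
  rw [Complex.star_def, Complex.normSq_eq_conj_mul_self]

lemma eq_zero_of_trace_eq_zero {d : ℕ} (B : Matrix (Fin d) (Fin d) ℂ)
    (h : (Bᴴ * B).trace = 0) : B = 0 := by
  rw [trace_normSq, Complex.ofReal_eq_zero] at h
  have h1 := (Finset.sum_eq_zero_iff_of_nonneg
    (fun j _ => Finset.sum_nonneg fun i _ => Complex.normSq_nonneg _)).mp h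
  ext i j
  have h2 := (Finset.sum_eq_zero_iff_of_nonneg
    (fun i _ => Complex.normSq_nonneg _)).mp (h1 j (Finset.mem_univ _)) i (Finset.mem_univ _)
  simpa using Complex.normSq_eq_zero.mp h2

lemma bddAbove_trace_set {d : ℕ} (𝒜 : Set (Matrix (Fin d) (Fin d) ℂ))
    (hc : IsCompact 𝒜) (σ : Matrix (Fin d) (Fin d) ℂ) :
    BddAbove {x : ℝ | ∃ T ∈ 𝒜, x = ((σ * T).trace).re} := by
  have hset : {x : ℝ | ∃ T ∈ 𝒜, x = ((σ * T).trace).re}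
      = (fun T => ((σ * T).trace).re) '' 𝒜 := by
    ext x; simp [Set.mem_image, eq_comm]
  rw [hset]
  refine (hc.image ?_).bddAbove
  have h1 : Continuous fun T : Matrix (Fin d) (Fin d) ℂ => (σ * T).trace := by
    have heq : (fun T : Matrix (Fin d) (Fin d) ℂ => (σ * T).trace)
        = fun T => ∑ i, ∑ j, σ i j * T j i := by
      funext T; simp [Matrix.trace, Matrix.mul_apply, Matrix.diag]
    rw [heq]
    exact continuous_finset_sum _ fun i _ => continuous_finset_sum _ fun j _ =>
      continuous_const.mul ((continuous_apply i).comp (continuous_apply j))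
  exact Complex.continuous_re.comp h1
lemma exists_unitary_conj {d : ℕ} (A : Matrix (Fin d) (Fin d) ℂ) :
    ∃ V ∈ Matrix.unitaryGroup (Fin d) ℂ, Aᴴ * A = star V * (A * Aᴴ) * V := by
  have hM : (Aᴴ * A).PosSemidef := posSemidef_conjTranspose_mul_self A
  have h := hM.1
  set U : Matrix (Fin d) (Fin d) ℂ := (h.eigenvectorUnitary : Matrix (Fin d) (Fin d) ℂ) with hU
  set lam := h.eigenvalues with hlam
  have hlam0 : ∀ i, 0 ≤ lam i := hM.eigenvalues_nonneg
  have hUmem : U ∈ Matrix.unitaryGroup (Fin d) ℂ := h.eigenvectorUnitary.2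
  set D : Matrix (Fin d) (Fin d) ℂ := diagonal (fun i => (lam i : ℂ)) with hD
  have hdiag : star U * (Aᴴ * A) * U = D := by
    have := h.conjStarAlgAut_star_eigenvectorUnitary
    rw [Unitary.conjStarAlgAut_star_apply] at this
    convert this using 2 <;> rfl
  set B : Matrix (Fin d) (Fin d) ℂ := A * U with hB
  have hBB : Bᴴ * B = D := by
    rw [hB, conjTranspose_mul, ← hdiag, Matrix.star_eq_conjTranspose]
    noncomm_ring
  -- columns of B
  set b : Fin d → EuclideanSpace ℂ (Fin d) :=
    fun i => (WithLp.equiv 2 _).symm (fun x => B x i) with hb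
  have hbapp : ∀ i x, b i x = B x i := fun i x => rfl
  have hinner : ∀ i j, (inner ℂ (b i) (b j) : ℂ) = D i j := by
    intro i j
    rw [← hBB, Matrix.mul_apply, PiLp.inner_apply]
    apply Finset.sum_congr rfl
    intro x _
    simp [Matrix.conjTranspose_apply, hbapp, RCLike.inner_apply, mul_comm]
  set v : Fin d → EuclideanSpace ℂ (Fin d) :=
    fun i => (((Real.sqrt (lam i))⁻¹ : ℝ) : ℂ) • b i with hv
  set s : Set (Fin d) := {i | lam i ≠ 0} with hs
  have hvon : Orthonormal ℂ (s.restrict v) := by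
    rw [orthonormal_iff_ite]
    intro i j
    simp only [Set.restrict, Set.domRestrict_apply, hv, inner_smul_left, inner_smul_right, hinner]
    rw [hD]
    rcases eq_or_ne i j with rfl | hij
    · simp only [if_pos rfl, diagonal_apply_eq]
      have hpos : 0 < lam i.1 := lt_of_le_of_ne (hlam0 i.1) (Ne.symm i.2)
      rw [Complex.conj_ofReal, ← Complex.ofReal_mul, ← Complex.ofReal_mul]
      have : (Real.sqrt (lam i.1))⁻¹ * ((Real.sqrt (lam i.1))⁻¹ * lam i.1) = 1 := by
        rw [← mul_assoc, ← mul_inv, Real.mul_self_sqrt (le_of_lt hpos),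
          inv_mul_cancel₀ (ne_of_gt hpos)]
      simp [this]
    · have : (i : Fin d) ≠ (j : Fin d) := fun hh => hij (Subtype.ext hh)
      simp [diagonal_apply_ne _ this, if_neg hij]
  have card_eq : Module.finrank ℂ (EuclideanSpace ℂ (Fin d)) = Fintype.card (Fin d) := by
    simp [finrank_euclideanSpace]
  obtain ⟨w, hw⟩ := hvon.exists_orthonormalBasis_extension_of_card_eq card_eq
  set W : Matrix (Fin d) (Fin d) ℂ :=
    (EuclideanSpace.basisFun (Fin d) ℂ).toBasis.toMatrix w.toBasis with hW
  have hWmem : W ∈ Matrix.unitaryGroup (Fin d) ℂ :=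
    (EuclideanSpace.basisFun (Fin d) ℂ).toMatrix_orthonormalBasis_mem_unitary w
  have hWapp : ∀ x i, W x i = w i x := fun x i => rfl
  set sq : Matrix (Fin d) (Fin d) ℂ := diagonal (fun i => ((Real.sqrt (lam i) : ℝ) : ℂ)) with hsq
  have hBW : B = W * sq := by
    ext x i
    rw [hsq, Matrix.mul_diagonal, hWapp]
    rcases eq_or_ne (lam i) 0 with h0 | h0
    · have hb0 : b i = 0 := by
        rw [← inner_self_eq_zero (𝕜 := ℂ), hinner, hD, diagonal_apply_eq, h0]
        simp
      have : B x i = 0 := by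
        rw [← hbapp]; rw [hb0]; rfl
      rw [this, h0]; simp
    · have hwi : w i = v i := hw i h0
      rw [hwi]
      show B x i = ((((Real.sqrt (lam i))⁻¹ : ℝ) : ℂ) • b i) x * (Real.sqrt (lam i) : ℂ)
      have hbx : ((((Real.sqrt (lam i))⁻¹ : ℝ) : ℂ) • b i) x
          = (((Real.sqrt (lam i))⁻¹ : ℝ) : ℂ) * B x i := rfl
      rw [hbx]
      have hs0 : Real.sqrt (lam i) ≠ 0 :=
        Real.sqrt_ne_zero'.mpr (lt_of_le_of_ne (hlam0 i) (Ne.symm h0))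
      rw [mul_comm, ← mul_assoc, ← Complex.ofReal_mul,
        mul_inv_cancel₀ hs0, Complex.ofReal_one, one_mul]
  have hABU : A = B * star U := by
    rw [hB, mul_assoc, (Matrix.mem_unitaryGroup_iff).mp hUmem, mul_one]
  have hsqH : sqᴴ = sq := by
    rw [hsq, diagonal_conjTranspose]
    have : (star fun i => ((Real.sqrt (lam i) : ℝ) : ℂ))
        = fun i => ((Real.sqrt (lam i) : ℝ) : ℂ) := by
      funext i
      simp [Complex.star_def, Complex.conj_ofReal]
    rw [this]
  have hsqsq : sq * sq = D := by
    rw [hsq, diagonal_mul_diagonal, hD]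
    have : (fun i => ((Real.sqrt (lam i) : ℝ) : ℂ) * ((Real.sqrt (lam i) : ℝ) : ℂ))
        = fun i => ((lam i : ℝ) : ℂ) := by
      funext i
      rw [← Complex.ofReal_mul, Real.mul_self_sqrt (hlam0 i)]
    rw [this]
  have hAAH : A * Aᴴ = W * D * star W := by
    rw [hABU, conjTranspose_mul, ← Matrix.star_eq_conjTranspose B]
    rw [Matrix.star_eq_conjTranspose, conjTranspose_conjTranspose]
    calc B * star U * (U * Bᴴ) = B * (star U * U) * Bᴴ := by noncomm_ring
    _ = B * Bᴴ := by rw [(Matrix.mem_unitaryGroup_iff').mp hUmem]; simp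
    _ = W * D * star W := by
        rw [hBW, conjTranspose_mul, hsqH, Matrix.star_eq_conjTranspose]
        calc W * sq * (sq * Wᴴ) = W * (sq * sq) * Wᴴ := by noncomm_ring
        _ = W * D * Wᴴ := by rw [hsqsq]
  have hAHA : Aᴴ * A = U * D * star U := by
    rw [← hdiag]
    calc Aᴴ * A = (U * star U) * (Aᴴ * A) * (U * star U) := by
          rw [(Matrix.mem_unitaryGroup_iff).mp hUmem]; noncomm_ring
    _ = U * (star U * (Aᴴ * A) * U) * star U := by noncomm_ring
  refine ⟨W * star U, mul_mem hWmem (Unitary.star_mem hUmem), ?_⟩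
  rw [hAAH, hAHA]
  have h1 : star (W * star U) = U * star W := by
    rw [StarMul.star_mul, star_star]
  rw [h1]
  calc U * D * star U
      = U * (star W * W) * D * (star W * W) * star U := by
        rw [(Matrix.mem_unitaryGroup_iff').mp hWmem]; noncomm_ring
    _ = U * star W * (W * D * star W) * (W * star U) := by noncomm_ring

open scoped MatrixOrder in
lemma exists_sqrt_herm {d : ℕ} (ρ : Matrix (Fin d) (Fin d) ℂ) (hρ : ρ.PosSemidef) :
    ∃ R : Matrix (Fin d) (Fin d) ℂ, Rᴴ = R ∧ R * R = ρ :=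
  ⟨CFC.sqrt ρ, (CFC.sqrt_nonneg ρ).posSemidef.1, CFC.sqrt_mul_sqrt_self ρ hρ.nonneg⟩

open Matrix in
/-- For a POVM-type family `F_m` with `Σ F_m†F_m = I`, at least one of the
post-measurement states gives a value of `C` at least `C(ρ)`. -/
theorem stmt8 {d n : ℕ} (𝒜 : Set (Matrix (Fin d) (Fin d) ℂ))
    (h𝒜ne : 𝒜.Nonempty) (h𝒜c : IsCompact 𝒜)
    (h𝒜h : ∀ T ∈ 𝒜, T.IsHermitian)
    (h𝒜u : ∀ T ∈ 𝒜, ∀ U ∈ Matrix.unitaryGroup (Fin d) ℂ,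
      (U : Matrix (Fin d) (Fin d) ℂ)ᴴ * T * (U : Matrix (Fin d) (Fin d) ℂ) ∈ 𝒜)
    (C : Matrix (Fin d) (Fin d) ℂ → ℝ)
    (hC : ∀ ρ, C ρ = sSup {x : ℝ | ∃ T ∈ 𝒜, x = ((ρ * T).trace).re})
    (ρ : Matrix (Fin d) (Fin d) ℂ) (hρ : ρ.PosSemidef) (hρ1 : ρ.trace = 1)
    (F : Fin n → Matrix (Fin d) (Fin d) ℂ)
    (hF : ∑ m, (F m)ᴴ * F m = 1) :
    ∃ m, F m * ρ * (F m)ᴴ ≠ 0 ∧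
      C ρ ≤ C ((((F m)ᴴ * F m * ρ).trace)⁻¹ • (F m * ρ * (F m)ᴴ)) := by
  classical
  obtain ⟨R, hRH, hRR⟩ := exists_sqrt_herm ρ hρ
  set A : Fin n → Matrix (Fin d) (Fin d) ℂ := fun m => F m * R with hAdef
  have hAH : ∀ m, (A m)ᴴ = R * (F m)ᴴ := fun m => by
    rw [hAdef, conjTranspose_mul, hRH]
  have hAAH : ∀ m, A m * (A m)ᴴ = F m * ρ * (F m)ᴴ := by
    intro m
    rw [hAH, hAdef]
    calc F m * R * (R * (F m)ᴴ) = F m * (R * R) * (F m)ᴴ := by noncomm_ring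
    _ = F m * ρ * (F m)ᴴ := by rw [hRR]
  have hAHA : ∀ m, (A m)ᴴ * A m = R * ((F m)ᴴ * F m) * R := by
    intro m
    rw [hAH, hAdef]
    noncomm_ring
  have hsum : ∑ m, (A m)ᴴ * A m = ρ := by
    calc ∑ m, (A m)ᴴ * A m = ∑ m, R * ((F m)ᴴ * F m) * R := by
          exact Finset.sum_congr rfl fun m _ => hAHA m
    _ = R * (∑ m, (F m)ᴴ * F m) * R := by rw [← Finset.sum_mul, ← Finset.mul_sum]
    _ = ρ := by rw [hF, mul_one, hRR]
  set t : Fin n → ℂ := fun m => ((F m)ᴴ * F m * ρ).trace with htdef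
  have htA : ∀ m, t m = ((A m)ᴴ * A m).trace := by
    intro m
    show ((F m)ᴴ * F m * ρ).trace = _
    rw [hAHA, ← hRR, ← mul_assoc, Matrix.trace_mul_cycle]
  set r : Fin n → ℝ := fun m => (t m).re with hrdef
  have hreal : ∀ m, 0 ≤ r m ∧ t m = ((r m : ℝ) : ℂ) := by
    intro m
    have h1 : t m = ((∑ j, ∑ i, Complex.normSq (A m i j) : ℝ) : ℂ) := by
      rw [htA, trace_normSq]
    have h2 : r m = ∑ j, ∑ i, Complex.normSq (A m i j) := by
      show (t m).re = _
      rw [h1, Complex.ofReal_re]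
    refine ⟨by
      rw [h2]
      exact Finset.sum_nonneg fun _ _ => Finset.sum_nonneg fun _ _ => Complex.normSq_nonneg _,
      by rw [h1, h2]⟩
  have hsumt : ∑ m, t m = 1 := by
    calc ∑ m, t m = ∑ m, ((A m)ᴴ * A m).trace := Finset.sum_congr rfl fun m _ => htA m
    _ = (∑ m, (A m)ᴴ * A m).trace := (Matrix.trace_sum _ _).symm
    _ = ρ.trace := by rw [hsum]
    _ = 1 := hρ1
  have hsumr : ∑ m, r m = 1 := by
    have h1 : ((∑ m, r m : ℝ) : ℂ) = 1 := by
      push_cast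
      calc ∑ m, ((r m : ℝ) : ℂ) = ∑ m, t m :=
            Finset.sum_congr rfl fun m _ => ((hreal m).2).symm
      _ = 1 := hsumt
    exact_mod_cast h1
  set X : Fin n → Matrix (Fin d) (Fin d) ℂ := fun m => F m * ρ * (F m)ᴴ with hXdef
  have hzero : ∀ m, t m = 0 → X m = 0 := by
    intro m h0
    rw [htA] at h0
    have hA0 := eq_zero_of_trace_eq_zero _ h0
    show F m * ρ * (F m)ᴴ = 0
    rw [← hAAH, hA0]
    simp
  set E : Finset (Fin n) := Finset.univ.filter (fun m => t m ≠ 0) with hEdef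
  have hEne : E.Nonempty := by
    by_contra hne
    have hall : ∀ m, t m = 0 := by
      intro m
      by_contra h0
      exact hne ⟨m, Finset.mem_filter.mpr ⟨Finset.mem_univ m, h0⟩⟩
    rw [Finset.sum_eq_zero (fun m _ => hall m)] at hsumt
    exact one_ne_zero hsumt.symm
  choose V hVmem hVeq using fun m => exists_unitary_conj (A m)
  have hdecomp : ρ = ∑ m, star (V m) * X m * V m := by
    rw [← hsum]
    refine Finset.sum_congr rfl fun m _ => ?_
    rw [hVeq m, hAAH m]
  set σf : Fin n → Matrix (Fin d) (Fin d) ℂ := fun m => (t m)⁻¹ • X m with hσdef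
  set g : Fin n → ℝ := fun m => C (σf m) with hgdef
  obtain ⟨m₀, hm₀E, hm₀max⟩ := E.exists_max_image g hEne
  have ht0 : t m₀ ≠ 0 := (Finset.mem_filter.mp hm₀E).2
  refine ⟨m₀, ?_, ?_⟩
  · intro hcon
    apply ht0
    have h1 : t m₀ = (F m₀ * ρ * (F m₀)ᴴ).trace := by
      show ((F m₀)ᴴ * F m₀ * ρ).trace = _
      rw [mul_assoc, Matrix.trace_mul_comm]
    rw [h1, hcon, Matrix.trace_zero]
  · show C ρ ≤ g m₀
    rw [hC ρ]
    apply csSup_le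
    · obtain ⟨T₀, hT₀⟩ := h𝒜ne
      exact ⟨_, T₀, hT₀, rfl⟩
    rintro x ⟨T, hT, rfl⟩
    have hterm : ∀ m, (star (V m) * X m * V m * T).trace
        = (X m * (V m * T * star (V m))).trace := by
      intro m
      rw [show star (V m) * X m * V m * T = star (V m) * (X m * V m * T) by noncomm_ring,
        Matrix.trace_mul_comm,
        show X m * V m * T * star (V m) = X m * (V m * T * star (V m)) by noncomm_ring]
    have hT' : ∀ m, V m * T * star (V m) ∈ 𝒜 := by
      intro m
      have h1 := h𝒜u T hT (star (V m)) (Unitary.star_mem (hVmem m))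
      simpa [Matrix.star_eq_conjTranspose, conjTranspose_conjTranspose] using h1
    have htrace_decomp : (ρ * T).trace = ∑ m, (X m * (V m * T * star (V m))).trace := by
      conv_lhs => rw [hdecomp]
      rw [Finset.sum_mul, Matrix.trace_sum]
      exact Finset.sum_congr rfl fun m _ => hterm m
    rw [htrace_decomp, Complex.re_sum]
    calc ∑ m, ((X m * (V m * T * star (V m))).trace).re
        ≤ ∑ m, r m * g m₀ := by
          refine Finset.sum_le_sum fun m _ => ?_
          by_cases hm : t m = 0
          · have hX0 : X m = 0 := hzero m hm
            have hr0 : r m = 0 := by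
              show (t m).re = 0
              rw [hm, Complex.zero_re]
            rw [hX0, hr0, Matrix.zero_mul, Matrix.trace_zero, Complex.zero_re, zero_mul]
          · have hXm : X m = t m • σf m := by
              show X m = t m • ((t m)⁻¹ • X m)
              rw [smul_smul, mul_inv_cancel₀ hm, one_smul]
            have hre : ((X m * (V m * T * star (V m))).trace).re
                = r m * ((σf m * (V m * T * star (V m))).trace).re := by
              rw [hXm, smul_mul_assoc, Matrix.trace_smul, (hreal m).2, smul_eq_mul]
              simp [Complex.mul_re, Complex.ofReal_re, Complex.ofReal_im]
            rw [hre]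
            have hle1 : ((σf m * (V m * T * star (V m))).trace).re ≤ g m := by
              show _ ≤ C (σf m)
              rw [hC (σf m)]
              exact le_csSup (bddAbove_trace_set 𝒜 h𝒜c (σf m))
                ⟨V m * T * star (V m), hT' m, rfl⟩
            have hle2 : g m ≤ g m₀ :=
              hm₀max m (Finset.mem_filter.mpr ⟨Finset.mem_univ m, hm⟩)
            exact mul_le_mul_of_nonneg_left (hle1.trans hle2) (hreal m).1
    _ = g m₀ := by rw [← Finset.sum_mul, hsumr, one_mul]
end

section
/- Let ρ be a density matrix on ℂᵈ and Π_m finitely many orthogonal projections with Σ_m Π_m = I_d. Then ρ majorizes ρ' = Σ_m Π_m ρ Π_m (the pinched state), i.e., the decreasing spectrum of ρ majorizes that of ρ'. -/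
open ComplexOrder

/-- Partial sum of the first `j` components of a vector. -/
def psum {d : ℕ} (a : Fin d → ℝ) (j : ℕ) : ℝ :=
  ∑ i ∈ Finset.univ.filter (fun i : Fin d => (i : ℕ) < j), a i

section Aux

open Matrix

lemma card_filter_lt' {d : ℕ} (j : ℕ) (hj : j ≤ d) :
    (Finset.univ.filter (fun i : Fin d => (i:ℕ) < j)).card = j := by
  have h : Finset.univ.filter (fun i : Fin d => (i:ℕ) < j)
      = (Finset.univ : Finset (Fin j)).map ⟨Fin.castLE hj, Fin.castLE_injective hj⟩ := by
    ext i
    simp only [Finset.mem_filter, Finset.mem_univ, true_and, Finset.mem_map,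
      Function.Embedding.coeFn_mk]
    constructor
    · intro h; exact ⟨⟨i, h⟩, by ext; rfl⟩
    · rintro ⟨k, rfl⟩; exact k.2
  rw [h, Finset.card_map, Finset.card_univ, Fintype.card_fin]

lemma knapsack {d : ℕ} (l s : Fin d → ℝ) (hl : Antitone l) (hl0 : ∀ i, 0 ≤ l i)
    (hs0 : ∀ i, 0 ≤ s i) (hs1 : ∀ i, s i ≤ 1) (j : ℕ) (hj : j ≤ d)
    (hsum : ∑ i, s i = j) : ∑ i, l i * s i ≤ psum l j := by
  set c : ℝ := if h : j < d then l ⟨j, h⟩ else 0 with hc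
  have key : ∀ i : Fin d, l i * s i - (if (i:ℕ) < j then l i else 0)
      ≤ c * (s i - if (i:ℕ) < j then 1 else 0) := by
    intro i
    by_cases hij : (i:ℕ) < j
    · simp only [if_pos hij]
      have hci : c ≤ l i := by
        by_cases h : j < d
        · rw [hc, dif_pos h]
          exact hl (by simpa [Fin.le_def] using le_of_lt hij)
        · rw [hc, dif_neg h]; exact hl0 i
      have : l i * (s i - 1) ≤ c * (s i - 1) :=
        mul_le_mul_of_nonpos_right hci (by linarith [hs1 i])
      linarith [this]
    · simp only [if_neg hij]
      have hic : l i ≤ c := by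
        have hjd : j < d := lt_of_le_of_lt (le_of_not_gt hij) i.2
        rw [hc, dif_pos hjd]
        exact hl (by simpa [Fin.le_def] using le_of_not_gt hij)
      have : l i * s i ≤ c * s i := mul_le_mul_of_nonneg_right hic (hs0 i)
      linarith [this]
  have hsumkey : ∑ i : Fin d, (l i * s i - if (i:ℕ) < j then l i else 0)
      ≤ ∑ i : Fin d, c * (s i - if (i:ℕ) < j then 1 else 0) :=
    Finset.sum_le_sum (fun i _ => key i)
  have e1 : ∑ i : Fin d, (if (i:ℕ) < j then l i else 0) = psum l j := by
    rw [psum, Finset.sum_filter]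
  have e2 : ∑ i : Fin d, (if (i:ℕ) < j then (1:ℝ) else 0) = j := by
    rw [← Finset.sum_filter, Finset.sum_const, card_filter_lt' j hj, nsmul_eq_mul, mul_one]
  rw [← Finset.mul_sum, Finset.sum_sub_distrib, e1, Finset.sum_sub_distrib, e2, hsum, sub_self,
    mul_zero, sub_nonpos] at hsumkey
  exact hsumkey

lemma psd_diag_nonneg {d : ℕ} {X : Matrix (Fin d) (Fin d) ℂ} (hX : X.PosSemidef) (i : Fin d) :
    0 ≤ X i i := by
  exact hX.diag_nonneg

lemma trace_mul_diag {d : ℕ} (Y : Matrix (Fin d) (Fin d) ℂ) (f : Fin d → ℂ) :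
    (Y * Matrix.diagonal f).trace = ∑ i, Y i i * f i := by
  simp [Matrix.trace, Matrix.diag, Matrix.mul_diagonal]

lemma herm_trace_eq {d : ℕ} {A : Matrix (Fin d) (Fin d) ℂ} (hA : A.IsHermitian) :
    A.trace = ∑ i, (hA.eigenvalues i : ℂ) := by
  conv_lhs => rw [hA.spectral_theorem, Unitary.conjStarAlgAut_apply]
  rw [Matrix.trace_mul_comm, ← mul_assoc,
    Matrix.mem_unitaryGroup_iff'.mp (hA.eigenvectorUnitary).2, one_mul, Matrix.trace_diagonal]
  rfl

/-- `tr(X M) = ∑ (U* X U)_{ii} λ_i` for `M` Hermitian with eigen-decomposition `U D U*`. -/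
lemma trace_mul_herm {d : ℕ} (X M : Matrix (Fin d) (Fin d) ℂ) (hM : M.IsHermitian) :
    (X * M).trace = ∑ i,
      ((star (hM.eigenvectorUnitary : Matrix (Fin d) (Fin d) ℂ)) * X *
        (hM.eigenvectorUnitary : Matrix (Fin d) (Fin d) ℂ)) i i * (hM.eigenvalues i : ℂ) := by
  conv_lhs => rw [hM.spectral_theorem, Unitary.conjStarAlgAut_apply]
  rw [← mul_assoc, ← mul_assoc, Matrix.trace_mul_comm, ← mul_assoc, ← mul_assoc,
    trace_mul_diag]
  rfl

lemma trace_le {d : ℕ} (A X : Matrix (Fin d) (Fin d) ℂ) (hA : A.PosSemidef)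
    (hX : X.PosSemidef) (hX1 : ((1 : Matrix (Fin d) (Fin d) ℂ) - X).PosSemidef)
    (j : ℕ) (hj : j ≤ d) (htr : X.trace = (j : ℂ))
    (l : Fin d → ℝ) (hl : Antitone l) (σ : Equiv.Perm (Fin d))
    (hlσ : l = hA.isHermitian.eigenvalues ∘ σ) :
    ((X * A).trace).re ≤ psum l j := by
  set hAh := hA.isHermitian with hhAh
  set U : Matrix (Fin d) (Fin d) ℂ := (hAh.eigenvectorUnitary : Matrix (Fin d) (Fin d) ℂ) with hU
  have hUU : star U * U = 1 := Matrix.mem_unitaryGroup_iff'.mp hAh.eigenvectorUnitary.2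
  have hUU' : U * star U = 1 := Matrix.mem_unitaryGroup_iff.mp hAh.eigenvectorUnitary.2
  set Y : Matrix (Fin d) (Fin d) ℂ := star U * X * U with hY
  have hYpsd : Y.PosSemidef := by
    rw [hY, Matrix.star_eq_conjTranspose]; exact hX.conjTranspose_mul_mul_same U
  have hY1 : ((1 : Matrix (Fin d) (Fin d) ℂ) - Y).PosSemidef := by
    have e : star U * (1 - X) * U = 1 - Y := by
      rw [mul_sub, mul_one, sub_mul, hUU]
    have := hX1.conjTranspose_mul_mul_same U
    rw [Matrix.star_eq_conjTranspose] at e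
    rwa [e] at this
  set t : Fin d → ℝ := fun i => (Y i i).re with ht
  have hYr : ∀ i, Y i i = ((t i : ℝ) : ℂ) := by
    intro i
    have h := Complex.nonneg_iff.mp (psd_diag_nonneg hYpsd i)
    exact Complex.ext rfl h.2.symm
  have hti0 : ∀ i, 0 ≤ t i := fun i => (Complex.nonneg_iff.mp (psd_diag_nonneg hYpsd i)).1
  have hti1 : ∀ i, t i ≤ 1 := by
    intro i
    have h := (Complex.nonneg_iff.mp (psd_diag_nonneg hY1 i)).1
    simp only [Matrix.sub_apply, Matrix.one_apply_eq, Complex.sub_re, Complex.one_re] at h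
    linarith
  have hYtr : Y.trace = (j : ℂ) := by
    rw [hY, Matrix.trace_mul_comm, ← mul_assoc, hUU', one_mul, htr]
  have hts : ∑ i, t i = (j : ℝ) := by
    have : (Y.trace).re = (j : ℝ) := by rw [hYtr]; simp
    rw [Matrix.trace] at this
    rw [← this, Complex.re_sum]
    rfl
  have key : (X * A).trace = ∑ i, Y i i * (hAh.eigenvalues i : ℂ) := trace_mul_herm X A hAh
  have key2 : ((X * A).trace).re = ∑ i, t i * hAh.eigenvalues i := by
    rw [key]
    have e : ∀ i ∈ Finset.univ, Y i i * (hAh.eigenvalues i : ℂ)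
        = ((t i * hAh.eigenvalues i : ℝ) : ℂ) := fun i _ => by rw [hYr i]; push_cast; ring
    rw [Finset.sum_congr rfl e, ← Complex.ofReal_sum, Complex.ofReal_re]
  rw [key2]
  have reindex : ∑ i, t i * hAh.eigenvalues i = ∑ k, l k * t (σ k) := by
    rw [← Equiv.sum_comp σ (fun i => t i * hAh.eigenvalues i)]
    exact Finset.sum_congr rfl fun k _ => by rw [hlσ]; simp [mul_comm]
  rw [reindex]
  refine knapsack l (fun k => t (σ k)) hl ?_ (fun k => hti0 _) (fun k => hti1 _) j hj ?_
  · intro k; rw [hlσ]; exact hA.eigenvalues_nonneg _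
  · rw [Equiv.sum_comp σ t, hts]

end Aux

open Matrix in
/-- Quantum Hardy–Littlewood–Pólya: a density matrix majorizes its pinching
`Σ_m P_m ρ P_m` by projections summing to the identity. -/
theorem stmt15 {d n : ℕ} (P : Fin n → Matrix (Fin d) (Fin d) ℂ)
    (hPp : ∀ m, P m * P m = P m) (hPh : ∀ m, (P m)ᴴ = P m)
    (hP1 : ∑ m, P m = 1)
    (ρ : Matrix (Fin d) (Fin d) ℂ) (hρ : ρ.PosSemidef) (hρ1 : ρ.trace = 1)
    (hρ' : (∑ m, P m * ρ * P m).IsHermitian)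
    (l l' : Fin d → ℝ) (hls : Antitone l) (hl's : Antitone l')
    (hlp : ∃ σ : Equiv.Perm (Fin d), l = hρ.isHermitian.eigenvalues ∘ σ)
    (hl'p : ∃ σ : Equiv.Perm (Fin d), l' = hρ'.eigenvalues ∘ σ) :
    (∀ j ≤ d, psum l' j ≤ psum l j) ∧ psum l d = psum l' d := by
  obtain ⟨σ, hσ⟩ := hlp
  obtain ⟨σ', hσ'⟩ := hl'p
  set ρ' : Matrix (Fin d) (Fin d) ℂ := ∑ m, P m * ρ * P m with hρ'def
  set U' : Matrix (Fin d) (Fin d) ℂ := (hρ'.eigenvectorUnitary : Matrix (Fin d) (Fin d) ℂ)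
    with hU'
  have hUU : star U' * U' = 1 := Matrix.mem_unitaryGroup_iff'.mp hρ'.eigenvectorUnitary.2
  have hUU' : U' * star U' = 1 := Matrix.mem_unitaryGroup_iff.mp hρ'.eigenvectorUnitary.2
  -- trace of ρ' equals trace of ρ
  have htrρ' : ρ'.trace = ρ.trace := by
    rw [hρ'def, Matrix.trace_sum]
    have e : ∀ m, (P m * ρ * P m).trace = (ρ * P m).trace := by
      intro m
      rw [Matrix.trace_mul_comm, ← mul_assoc, hPp m, Matrix.trace_mul_comm]
    rw [Finset.sum_congr rfl (fun m _ => e m)]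
    rw [← Matrix.trace_sum, ← Finset.mul_sum, hP1, mul_one]
  constructor
  · intro j hj
    -- the projection onto the top-j eigenvectors of ρ' (in the l' order)
    set χ : Fin d → ℝ := fun i => if ((σ'.symm i : Fin d) : ℕ) < j then 1 else 0 with hχ
    have hχ01 : ∀ i, χ i = 0 ∨ χ i = 1 := by
      intro i; rw [hχ]; dsimp only; split <;> simp
    set Dχ : Matrix (Fin d) (Fin d) ℂ := Matrix.diagonal (fun i => (χ i : ℂ)) with hDχ
    have hDχpsd : Dχ.PosSemidef := by
      refine Matrix.posSemidef_diagonal_iff.mpr (fun i => ?_)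
      rcases hχ01 i with h | h <;> simp [h]
    have hDχ1psd : ((1 : Matrix (Fin d) (Fin d) ℂ) - Dχ).PosSemidef := by
      have : (1 : Matrix (Fin d) (Fin d) ℂ) - Dχ
          = Matrix.diagonal (fun i => ((1 - χ i : ℝ) : ℂ)) := by
        rw [hDχ, ← Matrix.diagonal_one, Matrix.diagonal_sub]
        congr 1; ext i; push_cast; ring
      rw [this]
      refine Matrix.posSemidef_diagonal_iff.mpr (fun i => ?_)
      rcases hχ01 i with h | h <;> simp [h]
    set Q : Matrix (Fin d) (Fin d) ℂ := U' * Dχ * star U' with hQ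
    have hQpsd : Q.PosSemidef := by
      rw [hQ, Matrix.star_eq_conjTranspose]; exact hDχpsd.mul_mul_conjTranspose_same U'
    have hQ1psd : ((1 : Matrix (Fin d) (Fin d) ℂ) - Q).PosSemidef := by
      have e : U' * ((1 : Matrix (Fin d) (Fin d) ℂ) - Dχ) * star U' = 1 - Q := by
        rw [mul_sub, mul_one, sub_mul, hUU']
      have := hDχ1psd.mul_mul_conjTranspose_same U'
      rw [Matrix.star_eq_conjTranspose] at e
      rwa [e] at this
    -- sum of χ is j
    have hχsum : ∑ i, χ i = (j : ℝ) := by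
      have e : ∑ i, χ i = ∑ k : Fin d, (if (k : ℕ) < j then (1:ℝ) else 0) := by
        rw [← Equiv.sum_comp σ' χ]
        refine Finset.sum_congr rfl (fun k _ => ?_)
        rw [hχ]; simp
      rw [e, ← Finset.sum_filter, Finset.sum_const, card_filter_lt' j hj, nsmul_eq_mul, mul_one]
    have hQtr : Q.trace = (j : ℂ) := by
      rw [hQ, Matrix.trace_mul_comm, ← mul_assoc, hUU, one_mul, Matrix.trace_diagonal,
        ← Complex.ofReal_sum, hχsum]
      norm_num
    -- the pinched observable
    set X : Matrix (Fin d) (Fin d) ℂ := ∑ m, P m * Q * P m with hX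
    have hsum_psd : ∀ (R : Matrix (Fin d) (Fin d) ℂ), R.PosSemidef →
        (∑ m, P m * R * P m).PosSemidef := by
      intro R hR
      refine Finset.sum_induction _ _ (fun a b ha hb => ha.add hb) Matrix.PosSemidef.zero ?_
      intro m _
      have := hR.conjTranspose_mul_mul_same (P m)
      rwa [hPh m] at this
    have hXpsd : X.PosSemidef := hsum_psd Q hQpsd
    have h1X : (1 : Matrix (Fin d) (Fin d) ℂ) - X = ∑ m, P m * (1 - Q) * P m := by
      have e : ∀ m, P m * ((1 : Matrix (Fin d) (Fin d) ℂ) - Q) * P m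
          = P m - P m * Q * P m := by
        intro m
        rw [mul_sub, mul_one, sub_mul, hPp m]
      rw [Finset.sum_congr rfl (fun m _ => e m), Finset.sum_sub_distrib, hP1, hX]
    have hX1psd : ((1 : Matrix (Fin d) (Fin d) ℂ) - X).PosSemidef := by
      rw [h1X]; exact hsum_psd _ hQ1psd
    have hXtr : X.trace = (j : ℂ) := by
      rw [hX, Matrix.trace_sum]
      have e : ∀ m, (P m * Q * P m).trace = (Q * P m).trace := by
        intro m
        rw [Matrix.trace_mul_comm, ← mul_assoc, hPp m, Matrix.trace_mul_comm]
      rw [Finset.sum_congr rfl (fun m _ => e m), ← Matrix.trace_sum, ← Finset.mul_sum, hP1,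
        mul_one, hQtr]
    -- tr(X ρ) = tr(Q ρ')
    have hXρ : (X * ρ).trace = (Q * ρ').trace := by
      rw [hX, Finset.sum_mul, Matrix.trace_sum]
      have e : ∀ m, (P m * Q * P m * ρ).trace = (Q * (P m * ρ * P m)).trace := by
        intro m
        rw [show P m * Q * P m * ρ = (P m * Q) * (P m * ρ) by simp only [mul_assoc],
          Matrix.trace_mul_comm, show P m * ρ * (P m * Q) = (P m * ρ * P m) * Q by
            simp only [mul_assoc], Matrix.trace_mul_comm]
      rw [Finset.sum_congr rfl (fun m _ => e m), ← Matrix.trace_sum, ← Finset.mul_sum]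
    -- tr(Q ρ') = psum l' j
    have hQρ' : (Q * ρ').trace = ((psum l' j : ℝ) : ℂ) := by
      rw [trace_mul_herm Q ρ' hρ']
      have eQ : star (hρ'.eigenvectorUnitary : Matrix (Fin d) (Fin d) ℂ) * Q *
          (hρ'.eigenvectorUnitary : Matrix (Fin d) (Fin d) ℂ) = Dχ := by
        rw [hQ, ← hU', ← mul_assoc, ← mul_assoc, hUU, one_mul, mul_assoc, hUU, mul_one]
      rw [eQ]
      have e : ∀ i ∈ Finset.univ, Dχ i i * (hρ'.eigenvalues i : ℂ)
          = ((χ i * hρ'.eigenvalues i : ℝ) : ℂ) := by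
        intro i _
        rw [hDχ, Matrix.diagonal_apply_eq]
        push_cast; ring
      rw [Finset.sum_congr rfl e, ← Complex.ofReal_sum]
      congr 1
      rw [← Equiv.sum_comp σ' (fun i => χ i * hρ'.eigenvalues i)]
      rw [psum, Finset.sum_filter]
      refine Finset.sum_congr rfl (fun k _ => ?_)
      rw [hχ, hσ']
      simp only [Equiv.symm_apply_apply, Function.comp_apply, ite_mul, one_mul, zero_mul]
    have main := trace_le ρ X hρ hXpsd hX1psd j hj hXtr l hls σ hσ
    rw [hXρ, hQρ', Complex.ofReal_re] at main
    exact main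
  · -- equality of total sums
    have hfilter : Finset.univ.filter (fun i : Fin d => (i:ℕ) < d) = Finset.univ :=
      Finset.filter_true_of_mem (fun i _ => i.2)
    have e1 : psum l d = (ρ.trace).re := by
      rw [psum, hfilter, hσ, herm_trace_eq hρ.isHermitian, Complex.re_sum]
      simp only [Function.comp_apply, Complex.ofReal_re]
      exact Equiv.sum_comp σ _
    have e2 : psum l' d = (ρ'.trace).re := by
      rw [psum, hfilter, hσ', herm_trace_eq hρ', Complex.re_sum]
      simp only [Function.comp_apply, Complex.ofReal_re]
      exact Equiv.sum_comp σ' _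
    rw [e1, e2, htrρ']
end
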